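/- If f : ℝ≥0 → ℝ is concave, nonnegative, satisfies f(0) = 0, is differentiable at 0 with f'(0) = 1, and f(p) < p for all p > 0, then f is strictly subadditive: for all p₁, p₂ > 0, f(p₁ + p₂) < f(p₁) + f(p₂). -/

import Mathlib

open Topology Filter


/-- Auxiliary: concavity propagates a strict linear lower bound. -/
lemma aux_concave_prop (f : ℝ → ℝ)
    (hconc : ConcaveOn ℝ (Set.Ici (0 : ℝ)) f)
    {a b s c : ℝ} (ha : 0 ≤ a) (hab : a ≤ b) (hbs : b < s)
    (hfa : c * a < f a) (hfs : f s = c * s) : c * b < f b := by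
  have hden : 0 < s - a := by linarith
  have hl : 0 < (s - b) / (s - a) := div_pos (by linarith) hden
  have hm : 0 ≤ (b - a) / (s - a) := div_nonneg (by linarith) hden.le
  have hsum : (s - b) / (s - a) + (b - a) / (s - a) = 1 := by
    field_simp
    ring
  have hcomb : (s - b) / (s - a) * a + (b - a) / (s - a) * s = b := by
    field_simp
    ring
  have H := hconc.2 (show a ∈ Set.Ici (0:ℝ) from ha)
    (show s ∈ Set.Ici (0:ℝ) from by simp; linarith) hl.le hm hsum
  simp only [smul_eq_mul] at H
  rw [hcomb] at H
  have h1 : (s - b) / (s - a) * (c * a) < (s - b) / (s - a) * f a :=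
    mul_lt_mul_of_pos_left hfa hl
  have h2 : (b - a) / (s - a) * (c * s) ≤ (b - a) / (s - a) * f s := by
    rw [hfs]
  have h3 : (s - b) / (s - a) * (c * a) + (b - a) / (s - a) * (c * s) = c * b := by
    field_simp
    ring
  linarith

/-- If `f : ℝ → ℝ` restricted to `[0,∞)` is concave, nonnegative, satisfies
`f 0 = 0`, is differentiable at `0` (from the right) with derivative `1`, and `f p < p`
for all `p > 0`, then `f` is strictly subadditive on positive arguments. -/
theorem strict_subadditivity_of_concave
    (f : ℝ → ℝ)
    (hconc : ConcaveOn ℝ (Set.Ici (0 : ℝ)) f)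
    (hnonneg : ∀ p ≥ (0 : ℝ), 0 ≤ f p)
    (h0 : f 0 = 0)
    (hderiv : HasDerivWithinAt f 1 (Set.Ici (0 : ℝ)) 0)
    (hlt : ∀ p > (0 : ℝ), f p < p) :
    ∀ p₁ > (0 : ℝ), ∀ p₂ > (0 : ℝ), f (p₁ + p₂) < f p₁ + f p₂ := by
  intro p₁ hp₁ p₂ hp₂
  set s : ℝ := p₁ + p₂ with hs_def
  have hs : 0 < s := by positivity
  set c : ℝ := f s / s with hc_def
  have hcs : f s = c * s := by
    rw [hc_def]; field_simp
  have hc1 : c < 1 := (div_lt_one hs).mpr (hlt s hs)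
  -- the filter 𝓝[Ici 0 \ {0}] 0 equals 𝓝[>] 0
  have hset : Set.Ici (0:ℝ) \ {0} = Set.Ioi 0 := by
    ext x
    simp [lt_iff_le_and_ne, eq_comm]
  have hslope := hasDerivWithinAt_iff_tendsto_slope.mp hderiv
  rw [hset] at hslope
  have hev1 : ∀ᶠ x in 𝓝[>] (0:ℝ), c < slope f 0 x :=
    hslope.eventually (lt_mem_nhds hc1)
  have hev2 : ∀ᶠ x in 𝓝[>] (0:ℝ), x < min p₁ p₂ :=
    (eventually_lt_nhds (lt_min hp₁ hp₂)).filter_mono nhdsWithin_le_nhds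
  have hev3 : ∀ᶠ x in 𝓝[>] (0:ℝ), 0 < x := eventually_mem_nhdsWithin
  obtain ⟨x₀, hx1, hx2, hx3⟩ := (hev1.and (hev2.and hev3)).exists
  -- from slope bound, c * x₀ < f x₀
  have hslope_eq : slope f 0 x₀ = f x₀ / x₀ := by
    simp [slope_def_field, h0]
  rw [hslope_eq] at hx1
  have hfx₀ : c * x₀ < f x₀ := by
    have := (lt_div_iff₀ hx3).mp hx1
    linarith
  have hxp₁ : x₀ ≤ p₁ := le_of_lt (lt_of_lt_of_le hx2 (min_le_left _ _))
  have hxp₂ : x₀ ≤ p₂ := le_of_lt (lt_of_lt_of_le hx2 (min_le_right _ _))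
  have H₁ : c * p₁ < f p₁ :=
    aux_concave_prop f hconc hx3.le hxp₁ (by rw [hs_def]; linarith) hfx₀ hcs
  have H₂ : c * p₂ < f p₂ :=
    aux_concave_prop f hconc hx3.le hxp₂ (by rw [hs_def]; linarith) hfx₀ hcs
  have : f s = c * p₁ + c * p₂ := by rw [hcs, hs_def]; ring
  linarith
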